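/- Any finite set of n points in the unit square [0,1]² admits a spanning tree (in the complete graph on the points with Euclidean edge weights) of total length at most C·√n for an absolute constant C (one may take C = 4). -/

import Mathlib

open scoped Classical
open SimpleGraph
open SimpleGraph

private lemma pg_count (n : ℕ) (a b : Fin n) (hab : (a : ℕ) + 1 = (b : ℕ)) :
    ∀ {u v : Fin n} (w : (pathGraph n).Walk u v),
      ((w.edges.count s(a, b) : ℕ) : ZMod 2)
        = (if (v : ℕ) ≤ (a : ℕ) then 0 else 1) - (if (u : ℕ) ≤ (a : ℕ) then 0 else 1) := by
  intro u v w
  induction w with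
  | nil => simp
  | cons h p ih =>
    rename_i x y z
    rw [SimpleGraph.Walk.edges_cons, List.count_cons]
    push_cast [apply_ite (Nat.cast : ℕ → ZMod 2), beq_iff_eq]
    rw [ih]
    rw [pathGraph_adj] at h
    by_cases hexy : s(x, y) = s(a, b)
    · rw [if_pos hexy]
      have hval : ((x : ℕ) = a ∧ (y : ℕ) = b) ∨ ((x : ℕ) = b ∧ (y : ℕ) = a) := by
        rw [Sym2.eq_iff] at hexy
        rcases hexy with ⟨h1, h2⟩ | ⟨h1, h2⟩ <;> subst h1 <;> subst h2 <;> simp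
      split_ifs with h1 h2 h3 <;> first | (exfalso; omega) | decide
    · rw [if_neg hexy]
      have hval : ¬(((x : ℕ) = a ∧ (y : ℕ) = b) ∨ ((x : ℕ) = b ∧ (y : ℕ) = a)) := by
        rintro (⟨h1, h2⟩ | ⟨h1, h2⟩)
        · exact hexy (Sym2.eq_iff.mpr (Or.inl ⟨Fin.ext h1, Fin.ext h2⟩))
        · exact hexy (Sym2.eq_iff.mpr (Or.inr ⟨Fin.ext h1, Fin.ext h2⟩))
      split_ifs with h1 h2 h3 <;> first | (exfalso; omega) | decide

private lemma pathGraph_isAcyclic (n : ℕ) : (pathGraph n).IsAcyclic := by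
  intro v c hc
  have hlen := hc.three_le_length
  have hne : c.edges ≠ [] := by
    intro h
    have h2 : c.edges.length = c.length := c.length_edges
    rw [h] at h2
    simp at h2
    omega
  obtain ⟨e, he⟩ := List.exists_mem_of_ne_nil _ hne
  have hadj : e ∈ (pathGraph n).edgeSet := c.edges_subset_edgeSet he
  have hcount : c.edges.count e = 1 := List.count_eq_one_of_mem hc.edges_nodup he
  induction e using Sym2.ind with
  | _ x y =>
    rw [SimpleGraph.mem_edgeSet, pathGraph_adj] at hadj
    rcases hadj with h | h
    · have := pg_count n x y h c
      rw [hcount] at this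
      simp at this
    · have := pg_count n y x h c
      rw [Sym2.eq_swap] at hcount
      rw [hcount] at this
      simp at this

noncomputable def stripIdx (m : ℕ) (p : EuclideanSpace ℝ (Fin 2)) : ℕ :=
  min ⌊p 0 * m⌋₊ (m - 1)

noncomputable def keyFn (m : ℕ) (p : EuclideanSpace ℝ (Fin 2)) : ℝ :=
  (1 + Real.sqrt 2) * stripIdx m p + (if stripIdx m p % 2 = 0 then p 1 else 1 - p 1)

private lemma stripIdx_le (m : ℕ) (p : EuclideanSpace ℝ (Fin 2)) : stripIdx m p ≤ m - 1 :=
  min_le_right _ _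

private lemma stripIdx_bounds (m : ℕ) (hm : 1 ≤ m) (p : EuclideanSpace ℝ (Fin 2))
    (h0 : 0 ≤ p 0) (h1 : p 0 ≤ 1) :
    (stripIdx m p : ℝ) / m ≤ p 0 ∧ p 0 ≤ ((stripIdx m p : ℝ) + 1) / m := by
  have hmpos : (0 : ℝ) < m := by exact_mod_cast hm
  have hge : (0 : ℝ) ≤ p 0 * m := by positivity
  constructor
  · rw [div_le_iff₀ hmpos]
    calc ((stripIdx m p : ℝ)) ≤ (⌊p 0 * m⌋₊ : ℝ) := by
          exact_mod_cast min_le_left _ _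
      _ ≤ p 0 * m := Nat.floor_le hge
  · by_cases hc : ⌊p 0 * m⌋₊ ≤ m - 1
    · have hs : stripIdx m p = ⌊p 0 * m⌋₊ := min_eq_left hc
      rw [hs, le_div_iff₀ hmpos]
      have := Nat.lt_floor_add_one (p 0 * m)
      linarith
    · have hs : stripIdx m p = m - 1 := min_eq_right (le_of_not_ge hc)
      rw [hs, le_div_iff₀ hmpos]
      have : ((m : ℝ) - 1) + 1 = m := by ring
      have hcast : ((m - 1 : ℕ) : ℝ) = (m : ℝ) - 1 := by
        have := Nat.cast_sub hm (R := ℝ) (m := 1) (n := m)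
        simpa using this
      rw [hcast, this]
      nlinarith

private lemma yt_mem (m : ℕ) (p : EuclideanSpace ℝ (Fin 2)) (h0 : 0 ≤ p 1) (h1 : p 1 ≤ 1) :
    0 ≤ (if stripIdx m p % 2 = 0 then p 1 else 1 - p 1) ∧
      (if stripIdx m p % 2 = 0 then p 1 else 1 - p 1) ≤ 1 := by
  split_ifs <;> constructor <;> linarith

private lemma dist_le_abs_add (p q : EuclideanSpace ℝ (Fin 2)) :
    dist p q ≤ |p 0 - q 0| + |p 1 - q 1| := by
  rw [EuclideanSpace.dist_eq]
  rw [Fin.sum_univ_two]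
  have h0 : dist (p 0) (q 0) = |p 0 - q 0| := Real.dist_eq _ _
  have h1 : dist (p 1) (q 1) = |p 1 - q 1| := Real.dist_eq _ _
  rw [h0, h1]
  rw [show |p 0 - q 0| ^ 2 + |p 1 - q 1| ^ 2
      = (|p 0 - q 0|) ^ 2 + (|p 1 - q 1|) ^ 2 from rfl]
  have hnn : (0:ℝ) ≤ |p 0 - q 0| + |p 1 - q 1| := by positivity
  rw [show (|p 0 - q 0| + |p 1 - q 1|) = Real.sqrt ((|p 0 - q 0| + |p 1 - q 1|)^2) from
    (Real.sqrt_sq hnn).symm]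
  apply Real.sqrt_le_sqrt
  nlinarith [abs_nonneg (p 0 - q 0), abs_nonneg (p 1 - q 1)]

private lemma dist_le_key (m : ℕ) (hm : 1 ≤ m) (p q : EuclideanSpace ℝ (Fin 2))
    (hp : ∀ i, 0 ≤ p i ∧ p i ≤ 1) (hq : ∀ i, 0 ≤ q i ∧ q i ≤ 1)
    (hk : keyFn m p ≤ keyFn m q) :
    dist p q ≤ 1 / m + (keyFn m q - keyFn m p) := by
  have hmpos : (0 : ℝ) < m := by exact_mod_cast hm
  have hs2 : (0:ℝ) ≤ Real.sqrt 2 := Real.sqrt_nonneg 2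
  have hs2sq : Real.sqrt 2 ^ 2 = 2 := Real.sq_sqrt (by norm_num)
  have hytp := yt_mem m p (hp 1).1 (hp 1).2
  have hytq := yt_mem m q (hq 1).1 (hq 1).2
  by_cases hss : stripIdx m p = stripIdx m q
  · -- same strip
    have hbp := stripIdx_bounds m hm p (hp 0).1 (hp 0).2
    have hbq := stripIdx_bounds m hm q (hq 0).1 (hq 0).2
    have hx : |p 0 - q 0| ≤ 1 / m := by
      have hdiff : ((stripIdx m q : ℝ) + 1) / m - (stripIdx m q : ℝ) / m = 1 / m := by
        field_simp
        ring
      rw [abs_le]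
      rw [hss] at hbp
      constructor <;> linarith [hbp.1, hbp.2, hbq.1, hbq.2]
    have hky : keyFn m q - keyFn m p
        = (if stripIdx m q % 2 = 0 then q 1 else 1 - q 1)
          - (if stripIdx m p % 2 = 0 then p 1 else 1 - p 1) := by
      unfold keyFn
      rw [hss]
      ring
    have hy : |p 1 - q 1| ≤ keyFn m q - keyFn m p := by
      rw [hky, hss]
      have hk' : (if stripIdx m q % 2 = 0 then p 1 else 1 - p 1)
          ≤ (if stripIdx m q % 2 = 0 then q 1 else 1 - q 1) := by
        have := hk
        unfold keyFn at this
        rw [hss] at this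
        linarith
      split_ifs at hk' ⊢ with h
      · rw [abs_le]; constructor <;> linarith
      · rw [abs_le]; constructor <;> linarith
    calc dist p q ≤ |p 0 - q 0| + |p 1 - q 1| := dist_le_abs_add p q
      _ ≤ 1 / m + (keyFn m q - keyFn m p) := by linarith
  · -- different strips
    have hstep : (stripIdx m p : ℝ) + 1 ≤ (stripIdx m q : ℝ) := by
      have hcases : stripIdx m p < stripIdx m q ∨ stripIdx m q < stripIdx m p :=
        Nat.lt_or_lt_of_ne hss
      rcases hcases with h | h
      · exact_mod_cast Nat.succ_le_of_lt h
      · exfalso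
        have : (stripIdx m q : ℝ) + 1 ≤ (stripIdx m p : ℝ) := by
          exact_mod_cast Nat.succ_le_of_lt h
        unfold keyFn at hk
        nlinarith [hytp.1, hytp.2, hytq.1, hytq.2]
    have hkey : Real.sqrt 2 ≤ keyFn m q - keyFn m p := by
      unfold keyFn
      nlinarith [hytp.1, hytp.2, hytq.1, hytq.2]
    have hd2 : dist p q ≤ Real.sqrt 2 := by
      rw [EuclideanSpace.dist_eq, Fin.sum_univ_two]
      apply Real.sqrt_le_sqrt
      have h0 : dist (p 0) (q 0) ≤ 1 := by
        rw [Real.dist_eq, abs_le]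
        constructor <;> linarith [(hp 0).1, (hp 0).2, (hq 0).1, (hq 0).2]
      have h1 : dist (p 1) (q 1) ≤ 1 := by
        rw [Real.dist_eq, abs_le]
        constructor <;> linarith [(hp 1).1, (hp 1).2, (hq 1).1, (hq 1).2]
      nlinarith [dist_nonneg (x := p 0) (y := q 0), dist_nonneg (x := p 1) (y := q 1)]
    have hinv : (0:ℝ) ≤ 1 / m := by positivity
    linarith


private lemma isAcyclic_of_iso {V W : Type*} {G : SimpleGraph V} {H : SimpleGraph W}
    (φ : G ≃g H) (hH : H.IsAcyclic) : G.IsAcyclic := by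
  intro v c hc
  exact hH (c.map φ.toHom) (SimpleGraph.Walk.IsCycle.map φ.toEquiv.injective hc)

private lemma keyFn_bounds (m : ℕ) (hm : 1 ≤ m) (p : EuclideanSpace ℝ (Fin 2))
    (hp : ∀ i, 0 ≤ p i ∧ p i ≤ 1) :
    0 ≤ keyFn m p ∧ keyFn m p ≤ (1 + Real.sqrt 2) * ((m : ℝ) - 1) + 1 := by
  have hyt := yt_mem m p (hp 1).1 (hp 1).2
  have hs2 : (0:ℝ) ≤ Real.sqrt 2 := Real.sqrt_nonneg 2
  have hsle : (stripIdx m p : ℝ) ≤ (m : ℝ) - 1 := by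
    have h1 : stripIdx m p ≤ m - 1 := stripIdx_le m p
    have h2 : ((m - 1 : ℕ) : ℝ) = (m : ℝ) - 1 := by
      have := Nat.cast_sub hm (R := ℝ) (m := 1) (n := m)
      simpa using this
    calc (stripIdx m p : ℝ) ≤ ((m - 1 : ℕ) : ℝ) := by exact_mod_cast h1
      _ = (m : ℝ) - 1 := h2
  have hsnn : (0:ℝ) ≤ (stripIdx m p : ℝ) := Nat.cast_nonneg _
  unfold keyFn
  constructor
  · nlinarith [hyt.1]
  · nlinarith [hyt.2]

private lemma final_arith (n m : ℕ) (hn : 1 ≤ n) (hm : m = ⌈Real.sqrt n⌉₊) :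
    ((n:ℝ) - 1) / m + ((1 + Real.sqrt 2) * ((m:ℝ) - 1) + 1) ≤ 4 * Real.sqrt n := by
  set r := Real.sqrt n with hr
  have hn1 : (1:ℝ) ≤ (n:ℝ) := by exact_mod_cast hn
  have hr0 : 0 ≤ r := Real.sqrt_nonneg _
  have hr2 : r ^ 2 = n := Real.sq_sqrt (by positivity)
  have hr1 : 1 ≤ r := by nlinarith
  have hrpos : 0 < r := by linarith
  have hrm : r ≤ (m : ℝ) := by rw [hm]; exact Nat.le_ceil r
  have hmpos : (0:ℝ) < m := lt_of_lt_of_le hrpos hrm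
  have hm1 : (m : ℝ) < r + 1 := by rw [hm]; exact Nat.ceil_lt_add_one hr0
  have hs0 : (0:ℝ) ≤ Real.sqrt 2 := Real.sqrt_nonneg 2
  have hs2 : Real.sqrt 2 ^ 2 = 2 := Real.sq_sqrt (by norm_num)
  have hsle : Real.sqrt 2 ≤ 3/2 := by nlinarith
  have h1 : ((n:ℝ) - 1) / m ≤ ((n:ℝ) - 1) / r := by gcongr
  have h2 : ((n:ℝ) - 1) / r = r - 1 / r := by
    rw [← hr2]; field_simp
  have h3 : (1 + Real.sqrt 2) * ((m:ℝ) - 1) ≤ (1 + Real.sqrt 2) * r := by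
    have : (m:ℝ) - 1 ≤ r := by linarith
    nlinarith
  have hinv : r * (1 / r) = 1 := by field_simp
  have h4 : r - 1 / r + ((1 + Real.sqrt 2) * r + 1) ≤ 4 * r := by
    have hinvpos : 0 < 1 / r := by positivity
    nlinarith [sq_nonneg (r - 1)]
  linarith

theorem spanning_tree_unit_square (S : Finset (EuclideanSpace ℝ (Fin 2)))
    (hS : ∀ p ∈ S, ∀ i, 0 ≤ p i ∧ p i ≤ 1) (hne : S.Nonempty) :
    ∃ T : SimpleGraph S, T.Connected ∧ T.IsAcyclic ∧
      ∑ e ∈ Finset.univ.filter (fun e : Sym2 S => e ∈ T.edgeSet),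
        Sym2.lift ⟨fun (u v : S) => dist (u : EuclideanSpace ℝ (Fin 2)) (v : EuclideanSpace ℝ (Fin 2)),
          fun _ _ => dist_comm _ _⟩ e
        ≤ 4 * Real.sqrt (S.card) := by
  set n := S.card with hn
  have hn1 : 1 ≤ n := Finset.card_pos.mpr hne
  set m : ℕ := ⌈Real.sqrt n⌉₊ with hmdef
  have hm : 1 ≤ m := by
    rw [hmdef]
    have : (0:ℝ) < Real.sqrt n := Real.sqrt_pos.mpr (by exact_mod_cast hn1)
    exact Nat.one_le_iff_ne_zero.mpr (by positivity)
  -- sort the points by key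
  let r : ↥S → ↥S → Prop := fun a b => keyFn m a.1 ≤ keyFn m b.1
  haveI : IsTotal ↥S r := ⟨fun a b => le_total _ _⟩
  haveI : IsTrans ↥S r := ⟨fun a b c => le_trans⟩
  let L : List ↥S := List.insertionSort r S.attach.toList
  have hperm : List.Perm L S.attach.toList := List.perm_insertionSort r _
  have hsort : L.Pairwise r := List.pairwise_insertionSort r _
  have hlen : L.length = n := by
    rw [hperm.length_eq, Finset.length_toList, Finset.card_attach]
  have hnodup : L.Nodup := hperm.nodup_iff.mpr S.attach.nodup_toList
  let f : Fin n → ↥S := fun i => L.get (Fin.cast hlen.symm i)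
  have hfinj : Function.Injective f := by
    intro i j hij
    have := List.nodup_iff_injective_get.mp hnodup hij
    have h2 : (Fin.cast hlen.symm i).val = (Fin.cast hlen.symm j).val :=
      congrArg Fin.val this
    exact Fin.ext h2
  have hfbij : Function.Bijective f :=
    (Fintype.bijective_iff_injective_and_card f).mpr ⟨hfinj, by simp [Fintype.card_coe, hn]⟩
  let e : Fin n ≃ ↥S := Equiv.ofBijective f hfbij
  have he_app : ∀ i, e i = f i := fun i => rfl
  let G : SimpleGraph ↥S := (pathGraph n).comap e.symm.toEmbedding
  let iso : G ≃g pathGraph n := SimpleGraph.Iso.comap e.symm (pathGraph n)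
  refine ⟨G, ?_, ?_, ?_⟩
  · -- connected
    rw [iso.connected_iff]
    obtain ⟨k, hk⟩ : ∃ k, n = k + 1 := ⟨n - 1, by omega⟩
    rw [hk]
    exact pathGraph_connected k
  · exact isAcyclic_of_iso iso (pathGraph_isAcyclic n)
  · -- the length bound
    set W : Sym2 ↥S → ℝ := Sym2.lift ⟨fun (u v : ↥S) =>
      dist (u : EuclideanSpace ℝ (Fin 2)) (v : EuclideanSpace ℝ (Fin 2)),
      fun _ _ => dist_comm _ _⟩ with hW
    have hWnonneg : ∀ ed, 0 ≤ W ed := by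
      intro ed
      induction ed using Sym2.ind with
      | _ u v => rw [hW, Sym2.lift_mk]; exact dist_nonneg
    have hd0 := hne
    let d0 : ↥S := ⟨hne.choose, hne.choose_spec⟩
    let g : ℕ → ↥S := fun i => if h : i < n then f ⟨i, h⟩ else d0
    have hg : ∀ i (h : i < n), g i = f ⟨i, h⟩ := fun i h => dif_pos h
    have hginj : ∀ i < n, ∀ j < n, g i = g j → i = j := by
      intro i hi j hj hgij
      rw [hg i hi, hg j hj] at hgij
      have := hfinj hgij
      exact congrArg Fin.val (by exact_mod_cast this)
    let F : ℕ → Sym2 ↥S := fun i => s(g i, g (i + 1))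
    -- the filtered edge set is contained in the image of F
    have hsub : Finset.univ.filter (fun ed : Sym2 ↥S => ed ∈ G.edgeSet)
        ⊆ (Finset.range (n - 1)).image F := by
      intro ed hed
      rw [Finset.mem_filter] at hed
      obtain ⟨-, hed⟩ := hed
      induction ed using Sym2.ind with
      | _ u v =>
        rw [SimpleGraph.mem_edgeSet] at hed
        have hadj : (pathGraph n).Adj (e.symm u) (e.symm v) := hed
        rw [pathGraph_adj] at hadj
        rw [Finset.mem_image]
        rcases hadj with h | h
        · have hu : g (e.symm u : ℕ) = u := by
            rw [hg _ (e.symm u).isLt]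
            have h0 : (⟨(e.symm u : ℕ), (e.symm u).isLt⟩ : Fin n) = e.symm u := Fin.ext rfl
            rw [h0]
            exact e.apply_symm_apply u
          have hlt : (e.symm u : ℕ) + 1 < n := by rw [h]; exact (e.symm v).isLt
          have hv : g ((e.symm u : ℕ) + 1) = v := by
            rw [hg _ hlt]
            have h0 : (⟨(e.symm u : ℕ) + 1, hlt⟩ : Fin n) = e.symm v := Fin.ext h
            rw [h0]
            exact e.apply_symm_apply v
          refine ⟨(e.symm u : ℕ), Finset.mem_range.mpr (by
            have := (e.symm v).isLt; omega), ?_⟩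
          show s(g (e.symm u : ℕ), g ((e.symm u : ℕ) + 1)) = s(u, v)
          rw [hu, hv]
        · have hv : g (e.symm v : ℕ) = v := by
            rw [hg _ (e.symm v).isLt]
            have h0 : (⟨(e.symm v : ℕ), (e.symm v).isLt⟩ : Fin n) = e.symm v := Fin.ext rfl
            rw [h0]
            exact e.apply_symm_apply v
          have hlt : (e.symm v : ℕ) + 1 < n := by rw [h]; exact (e.symm u).isLt
          have hu : g ((e.symm v : ℕ) + 1) = u := by
            rw [hg _ hlt]
            have h0 : (⟨(e.symm v : ℕ) + 1, hlt⟩ : Fin n) = e.symm u := Fin.ext h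
            rw [h0]
            exact e.apply_symm_apply u
          refine ⟨(e.symm v : ℕ), Finset.mem_range.mpr (by
            have := (e.symm u).isLt; omega), ?_⟩
          show s(g (e.symm v : ℕ), g ((e.symm v : ℕ) + 1)) = s(u, v)
          rw [hv, hu, Sym2.eq_swap]
    -- F is injective on range (n-1)
    have hFinj : ∀ i ∈ Finset.range (n - 1), ∀ j ∈ Finset.range (n - 1),
        F i = F j → i = j := by
      intro i hi j hj hFij
      rw [Finset.mem_range] at hi hj
      have h1 := Sym2.eq_iff.mp hFij
      rcases h1 with ⟨ha, hb⟩ | ⟨ha, hb⟩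
      · exact hginj i (by omega) j (by omega) ha
      · have e1 := hginj i (by omega) (j+1) (by omega) ha
        have e2 := hginj (i+1) (by omega) j (by omega) hb
        omega
    -- coordinates of points
    have hcoord : ∀ (a : ↥S), ∀ i, 0 ≤ (a : EuclideanSpace ℝ (Fin 2)) i ∧
        (a : EuclideanSpace ℝ (Fin 2)) i ≤ 1 := fun a => hS a.1 a.2
    -- per-edge bound
    have hkey_mono : ∀ i, i < n - 1 →
        keyFn m (g i).1 ≤ keyFn m (g (i+1)).1 := by
      intro i hi
      have h1 : i < n := by omega
      have h2 : i + 1 < n := by omega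
      rw [hg i h1, hg (i+1) h2]
      have := hsort.rel_get_of_lt (a := Fin.cast hlen.symm ⟨i, h1⟩)
        (b := Fin.cast hlen.symm ⟨i+1, h2⟩) (by
          rw [Fin.lt_def]; exact Nat.lt_succ_self i)
      exact this
    have hedge : ∀ i, i < n - 1 →
        dist ((g i : EuclideanSpace ℝ (Fin 2))) ((g (i+1) : EuclideanSpace ℝ (Fin 2)))
          ≤ 1 / m + (keyFn m (g (i+1)).1 - keyFn m (g i).1) := by
      intro i hi
      exact dist_le_key m hm _ _ (hcoord (g i)) (hcoord (g (i+1))) (hkey_mono i hi)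
    -- assemble
    have hmain : ∑ ed ∈ Finset.univ.filter (fun ed : Sym2 ↥S => ed ∈ G.edgeSet), W ed
        ≤ ((n:ℝ) - 1) / m + ((1 + Real.sqrt 2) * ((m:ℝ) - 1) + 1) := by
      have step1 : ∑ ed ∈ Finset.univ.filter (fun ed : Sym2 ↥S => ed ∈ G.edgeSet), W ed
          ≤ ∑ ed ∈ (Finset.range (n - 1)).image F, W ed :=
        Finset.sum_le_sum_of_subset_of_nonneg hsub (fun i _ _ => hWnonneg i)
      have step2 : ∑ ed ∈ (Finset.range (n - 1)).image F, W ed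
          = ∑ i ∈ Finset.range (n - 1), W (F i) := Finset.sum_image hFinj
      have step3 : ∑ i ∈ Finset.range (n - 1), W (F i)
          ≤ ∑ i ∈ Finset.range (n - 1),
            (1 / (m:ℝ) + (keyFn m (g (i+1)).1 - keyFn m (g i).1)) := by
        apply Finset.sum_le_sum
        intro i hi
        rw [Finset.mem_range] at hi
        have : W (F i) = dist ((g i : EuclideanSpace ℝ (Fin 2)))
            ((g (i+1) : EuclideanSpace ℝ (Fin 2))) := by
          rw [hW]; exact Sym2.lift_mk _ _ _
        rw [this]
        exact hedge i hi
      have step4 : ∑ i ∈ Finset.range (n - 1),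
            (1 / (m:ℝ) + (keyFn m (g (i+1)).1 - keyFn m (g i).1))
          = (n - 1 : ℕ) * (1 / (m:ℝ)) + (keyFn m (g (n-1)).1 - keyFn m (g 0).1) := by
        rw [Finset.sum_add_distrib, Finset.sum_const, Finset.card_range,
          Finset.sum_range_sub (fun i => keyFn m (g i).1), nsmul_eq_mul]
      have hb1 := keyFn_bounds m hm (g (n-1)).1 (hcoord (g (n-1)))
      have hb0 := keyFn_bounds m hm (g 0).1 (hcoord (g 0))
      have hcast : ((n - 1 : ℕ) : ℝ) = (n : ℝ) - 1 := by
        have := Nat.cast_sub hn1 (R := ℝ) (m := 1) (n := n)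
        simpa using this
      have hmpos : (0:ℝ) < m := by exact_mod_cast hm
      calc ∑ ed ∈ Finset.univ.filter (fun ed : Sym2 ↥S => ed ∈ G.edgeSet), W ed
          ≤ ∑ ed ∈ (Finset.range (n - 1)).image F, W ed := step1
        _ = ∑ i ∈ Finset.range (n - 1), W (F i) := step2
        _ ≤ ∑ i ∈ Finset.range (n - 1),
            (1 / (m:ℝ) + (keyFn m (g (i+1)).1 - keyFn m (g i).1)) := step3
        _ = (n - 1 : ℕ) * (1 / (m:ℝ)) + (keyFn m (g (n-1)).1 - keyFn m (g 0).1) := step4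
        _ ≤ ((n:ℝ) - 1) / m + ((1 + Real.sqrt 2) * ((m:ℝ) - 1) + 1) := by
            rw [hcast]
            have : ((n:ℝ) - 1) * (1/(m:ℝ)) = ((n:ℝ) - 1) / m := by ring
            rw [this]
            linarith [hb1.2, hb0.1]
    exact le_trans hmain (final_arith n m hn1 hmdef)
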